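/- arXiv:2109.07863 — 7 statements merged into one kernel-verified Lean document; each statement's English description precedes it below -/
import Mathlib

section
/- Possibly-Infinite Refinement: Let Cfg and A be types, let step be a binary relation → on Cfg, let Vev be a relation relating a finite trace over Cfg, a finite trace over A, an element of Cfg, and an element of A, and let ξ be a binary relation between finite traces over Cfg and finite traces over A. If continuedsim_ξ(τ, κ) holds and validinfexec(τ, σ) holds, then there exists a possibly-infinite trace μ over A such that continuedinfsim_ζ(τ, κ, σ, μ) holds, where ζ := continuedsim_ξ. -/
/-- A finite trace over `X`: a nonempty finite sequence, given by a head and a tail. -/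
structure FinTrace (X : Type) where
  head : X
  tail : List X

/-- Last element of a finite trace. -/
def FinTrace.lst {X : Type} (t : FinTrace X) : X :=
  t.tail.getLast?.getD t.head

/-- Extension of a finite trace with an element appended at the end. -/
def FinTrace.ext {X : Type} (t : FinTrace X) (a : X) : FinTrace X :=
  ⟨t.head, t.tail ++ [a]⟩

/-- Valid finite execution traces: singleton traces are valid, and a valid trace may be
extended by a configuration reachable by one step from its last element. -/
inductive ValidExec {Cfg : Type} (step : Cfg → Cfg → Prop) : FinTrace Cfg → Prop where
  | singleton (c : Cfg) : ValidExec step ⟨c, []⟩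
  | extend (τ : FinTrace Cfg) (c : Cfg) :
      ValidExec step τ → step τ.lst c → ValidExec step (τ.ext c)

/-- `ValidInfExec step τ σ`: the greatest predicate such that either `τ` is a valid
execution and `σ` is empty, or `σ = c :: σ'` with `τ` valid, `last τ → c`, and the predicate
holds for `(τ :+ c, σ')`.  (Greatest fixpoint via its impredicative encoding.) -/
def ValidInfExec {Cfg : Type} (step : Cfg → Cfg → Prop)
    (τ : FinTrace Cfg) (σ : Stream'.Seq Cfg) : Prop :=
  ∃ P : FinTrace Cfg → Stream'.Seq Cfg → Prop,
    P τ σ ∧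
    ∀ τ' σ', P τ' σ' →
      (ValidExec step τ' ∧ σ' = Stream'.Seq.nil) ∨
      ∃ c σ'', σ' = Stream'.Seq.cons c σ'' ∧ ValidExec step τ' ∧ step τ'.lst c ∧
        P (τ'.ext c) σ''

/-- `ContinuedSim step Vev ξ τ κ`: the greatest binary relation such that `ξ τ κ` holds and
for every step `last τ → c` there is `δ` with `Vev τ κ c δ` and the relation holds for
`(τ :+ c, κ :+ δ)`.  (Greatest fixpoint via its impredicative encoding.) -/
def ContinuedSim {Cfg A : Type} (step : Cfg → Cfg → Prop)
    (Vev : FinTrace Cfg → FinTrace A → Cfg → A → Prop)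
    (ξ : FinTrace Cfg → FinTrace A → Prop)
    (τ : FinTrace Cfg) (κ : FinTrace A) : Prop :=
  ∃ P : FinTrace Cfg → FinTrace A → Prop,
    P τ κ ∧
    ∀ τ' κ', P τ' κ' →
      ξ τ' κ' ∧ ∀ c, step τ'.lst c → ∃ δ, Vev τ' κ' c δ ∧ P (τ'.ext c) (κ'.ext δ)

/-- `ContinuedInfSim ζ τ κ σ μ`: the greatest predicate such that either `ζ τ κ` holds and
`σ` and `μ` are both empty, or `σ = c :: σ'`, `μ = δ :: μ'`, `ζ (τ :+ c) (κ :+ δ)` holds and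
the predicate holds for `(τ :+ c, κ :+ δ, σ', μ')`. -/
def ContinuedInfSim {Cfg A : Type} (ζ : FinTrace Cfg → FinTrace A → Prop)
    (τ : FinTrace Cfg) (κ : FinTrace A)
    (σ : Stream'.Seq Cfg) (μ : Stream'.Seq A) : Prop :=
  ∃ P : FinTrace Cfg → FinTrace A → Stream'.Seq Cfg → Stream'.Seq A → Prop,
    P τ κ σ μ ∧
    ∀ τ' κ' σ' μ', P τ' κ' σ' μ' →
      (ζ τ' κ' ∧ σ' = Stream'.Seq.nil ∧ μ' = Stream'.Seq.nil) ∨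
      ∃ c δ σ'' μ'', σ' = Stream'.Seq.cons c σ'' ∧ μ' = Stream'.Seq.cons δ μ'' ∧
        ζ (τ'.ext c) (κ'.ext δ) ∧ P (τ'.ext c) (κ'.ext δ) σ'' μ''

section Aux

variable {Cfg A : Type} (step : Cfg → Cfg → Prop)
    (Vev : FinTrace Cfg → FinTrace A → Cfg → A → Prop)
    (ξ : FinTrace Cfg → FinTrace A → Prop)

lemma sim_unfold {τ κ} (h : ContinuedSim step Vev ξ τ κ) :
    ξ τ κ ∧ ∀ c, step τ.lst c → ∃ δ, Vev τ κ c δ ∧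
      ContinuedSim step Vev ξ (τ.ext c) (κ.ext δ) := by
  obtain ⟨P, hP, hstep⟩ := h
  have h1 := hstep τ κ hP
  refine ⟨h1.1, fun c hc => ?_⟩
  obtain ⟨δ, hv, hP'⟩ := h1.2 c hc
  exact ⟨δ, hv, P, hP', hstep⟩

lemma vie_unfold {τ σ} (h : ValidInfExec step τ σ) :
    (ValidExec step τ ∧ σ = Stream'.Seq.nil) ∨
    ∃ c σ', σ = Stream'.Seq.cons c σ' ∧ ValidExec step τ ∧ step τ.lst c ∧
      ValidInfExec step (τ.ext c) σ' := by
  obtain ⟨P, hP, hstep⟩ := h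
  rcases hstep τ σ hP with h1 | ⟨c, σ', rfl, hve, hs, hP'⟩
  · exact Or.inl h1
  · exact Or.inr ⟨c, σ', rfl, hve, hs, P, hP', hstep⟩

structure MySt where
  τ : FinTrace Cfg
  κ : FinTrace A
  σ : Stream'.Seq Cfg
  hsim : ContinuedSim step Vev ξ τ κ
  hval : ValidInfExec step τ σ

def MyRel (s : MySt step Vev ξ) (t : A × MySt step Vev ξ) : Prop :=
  ∃ c, s.σ = Stream'.Seq.cons c t.2.σ ∧ t.2.τ = s.τ.ext c ∧ t.2.κ = s.κ.ext t.1

open scoped Classical in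
noncomputable def fstep (s : MySt step Vev ξ) : Option (A × MySt step Vev ξ) :=
  if h : ∃ t, MyRel step Vev ξ s t then some h.choose else none

theorem possibly_infinite_refinement' {τ κ σ}
    (hsim : ContinuedSim step Vev ξ τ κ)
    (hval : ValidInfExec step τ σ) :
    ∃ μ : Stream'.Seq A, ContinuedInfSim (ContinuedSim step Vev ξ) τ κ σ μ := by
  classical
  let s0 : MySt step Vev ξ := ⟨τ, κ, σ, hsim, hval⟩
  refine ⟨Stream'.Seq.corec (fstep step Vev ξ) s0, ?_⟩
  refine ⟨fun τ' κ' σ' μ' => ∃ s : MySt step Vev ξ,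
    s.τ = τ' ∧ s.κ = κ' ∧ s.σ = σ' ∧ μ' = Stream'.Seq.corec (fstep step Vev ξ) s,
    ⟨s0, rfl, rfl, rfl, rfl⟩, ?_⟩
  rintro τ' κ' σ' μ' ⟨s, rfl, rfl, rfl, rfl⟩
  rcases vie_unfold step s.hval with ⟨hve, hnil⟩ | ⟨c, σ'', hcons, hve, hs, hval'⟩
  · left
    refine ⟨s.hsim, hnil, ?_⟩
    have hno : ¬ ∃ t, MyRel step Vev ξ s t := by
      rintro ⟨t, c, hc, -⟩
      rw [hnil] at hc
      exact (Stream'.Seq.notMem_nil c) (hc ▸ Stream'.Seq.mem_cons c t.2.σ)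
    apply Stream'.Seq.destruct_eq_none
    rw [Stream'.Seq.corec_eq]
    simp only [fstep]
    rw [dif_neg hno]
    rfl
  · right
    obtain ⟨δ, hvev, hsim'⟩ := (sim_unfold step Vev ξ s.hsim).2 c hs
    have hex : ∃ t, MyRel step Vev ξ s t := by
      refine ⟨(δ, ⟨s.τ.ext c, s.κ.ext δ, σ'', hsim', hval'⟩), ?_⟩
      unfold MyRel
      refine ⟨c, ?_, ?_, ?_⟩
      · exact hcons
      · rfl
      · rfl
    set t := hex.choose with ht
    obtain ⟨c', hc', hτ', hκ'⟩ := hex.choose_spec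
    rw [hcons] at hc'
    obtain ⟨hcc, hσσ⟩ := Stream'.Seq.cons_injective2 hc'.symm
    refine ⟨c, t.1, σ'', Stream'.Seq.corec (fstep step Vev ξ) t.2, hcons, ?_, ?_, ?_⟩
    · apply Stream'.Seq.destruct_eq_cons
      rw [Stream'.Seq.corec_eq]
      simp only [fstep]
      rw [dif_pos hex]
      rfl
    · subst hcc; exact hτ' ▸ hκ' ▸ t.2.hsim
    · subst hcc; exact ⟨t.2, hτ', hκ', hσσ, rfl⟩

end Aux

/-- Possibly-Infinite Refinement: if `continuedsim_ξ(τ, κ)` and `validinfexec(τ, σ)` hold,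
then there exists a possibly-infinite trace `μ` over `A` such that
`continuedinfsim_ζ(τ, κ, σ, μ)` holds, where `ζ := continuedsim_ξ`. -/
theorem possibly_infinite_refinement {Cfg A : Type}
    (step : Cfg → Cfg → Prop)
    (Vev : FinTrace Cfg → FinTrace A → Cfg → A → Prop)
    (ξ : FinTrace Cfg → FinTrace A → Prop)
    (τ : FinTrace Cfg) (κ : FinTrace A) (σ : Stream'.Seq Cfg)
    (hsim : ContinuedSim step Vev ξ τ κ)
    (hval : ValidInfExec step τ σ) :
    ∃ μ : Stream'.Seq A, ContinuedInfSim (ContinuedSim step Vev ξ) τ κ σ μ :=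
  possibly_infinite_refinement' step Vev ξ hsim hval
end

section
/- Consistency of the single-decree Paxos model: if init →SDP* (msgs, maxBal, maxVal) (reflexive-transitive closure of the SDP transition relation starting from the initial state) and both Chosen(msgs, v1) and Chosen(msgs, v2) hold, then v1 = v2. -/
/-- Messages of the single-decree Paxos model. -/
inductive M (A V : Type) where
  | msg1a (b : ℕ)
  | msg1b (a : A) (b : ℕ) (w : Option (ℕ × V))
  | msg2a (b : ℕ) (v : V)
  | msg2b (a : A) (b : ℕ) (v : V)

/-- An SDP state: sent messages, per-acceptor maximal ballot, per-acceptor last accepted value. -/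
abbrev SDPState (A V : Type) := Set (M A V) × (A → Option ℕ) × (A → Option (ℕ × V))

/-- The initial SDP state. -/
def SDPInit (A V : Type) : SDPState A V := (∅, fun _ => none, fun _ => none)

/-- `none <ᵒ b` always; `some b0 <ᵒ b` iff `b0 < b`. -/
def optLT : Option ℕ → ℕ → Prop
  | none, _ => True
  | some b0, b => b0 < b

/-- `none ≤ᵒ b` always; `some b0 ≤ᵒ b` iff `b0 ≤ b`. -/
def optLE : Option ℕ → ℕ → Prop
  | none, _ => True
  | some b0, b => b0 ≤ b

/-- The 1b-messages with a reported accepted value, for ballot `b` from members of `Q`. -/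
def Q1bv {A V : Type} (msgs : Set (M A V)) (Q : Set A) (b : ℕ) : Set (M A V) :=
  { m | m ∈ msgs ∧ ∃ a ∈ Q, ∃ p : ℕ × V, m = M.msg1b a b (some p) }

/-- Every acceptor in `Q` has sent a 1b-message for ballot `b`. -/
def HavePromised {A V : Type} (msgs : Set (M A V)) (Q : Set A) (b : ℕ) : Prop :=
  ∀ a ∈ Q, ∃ w, M.msg1b a b w ∈ msgs

/-- `v` is the value with maximal reported ballot among the 1b-messages for `b` from `Q`. -/
def IsMaxVote {A V : Type} (msgs : Set (M A V)) (Q : Set A) (b : ℕ) (v : V) : Prop :=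
  ∃ (a0 : A) (b0 : ℕ),
    M.msg1b a0 b (some (b0, v)) ∈ Q1bv msgs Q b ∧
    ∀ m' ∈ Q1bv msgs Q b, ∃ a' b' v', m' = M.msg1b a' b (some (b', v')) ∧ b' ≤ b0

/-- Proposing `v` at ballot `b` is safe, as witnessed by quorum `Q`. -/
def ShowsSafeAt {A V : Type} (msgs : Set (M A V)) (Q : Set A) (b : ℕ) (v : V) : Prop :=
  HavePromised msgs Q b ∧ (Q1bv msgs Q b = ∅ ∨ IsMaxVote msgs Q b v)

/-- The transition relation of the single-decree Paxos model. -/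
inductive SDPStep {A V : Type} [DecidableEq A] (Quorum : Set A → Prop) :
    SDPState A V → SDPState A V → Prop where
  | phase1a (msgs : Set (M A V)) (mb : A → Option ℕ) (mv : A → Option (ℕ × V)) (b : ℕ) :
      SDPStep Quorum (msgs, mb, mv) (msgs ∪ {M.msg1a b}, mb, mv)
  | phase1b (msgs : Set (M A V)) (mb : A → Option ℕ) (mv : A → Option (ℕ × V))
      (a : A) (b : ℕ)
      (h1 : M.msg1a b ∈ msgs) (h2 : optLT (mb a) b) :
      SDPStep Quorum (msgs, mb, mv)
        (msgs ∪ {M.msg1b a b (mv a)}, Function.update mb a (some b), mv)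
  | phase2a (msgs : Set (M A V)) (mb : A → Option ℕ) (mv : A → Option (ℕ × V))
      (b : ℕ) (v : V) (Q : Set A)
      (h1 : ¬ ∃ v', M.msg2a b v' ∈ msgs) (h2 : Quorum Q)
      (h3 : ShowsSafeAt msgs Q b v) :
      SDPStep Quorum (msgs, mb, mv) (msgs ∪ {M.msg2a b v}, mb, mv)
  | phase2b (msgs : Set (M A V)) (mb : A → Option ℕ) (mv : A → Option (ℕ × V))
      (a : A) (b : ℕ) (v : V)
      (h1 : M.msg2a b v ∈ msgs) (h2 : optLE (mb a) b) :
      SDPStep Quorum (msgs, mb, mv)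
        (msgs ∪ {M.msg2b a b v}, Function.update mb a (some b),
          Function.update mv a (some (b, v)))

/-- A value `v` is chosen: a quorum of acceptors have sent `msg2b` for `v` at some ballot. -/
def Chosen {A V : Type} (Quorum : Set A → Prop) (msgs : Set (M A V)) (v : V) : Prop :=
  ∃ (b : ℕ) (Q : Set A), Quorum Q ∧ ∀ a ∈ Q, M.msg2b a b v ∈ msgs

section PaxosProof

variable {A V : Type} [DecidableEq A] (Quorum : Set A → Prop)

/-- `v` is safe at ballot `b`: for every smaller ballot, some quorum of acceptors either
voted for `v` there or can never vote there. -/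
def SafeAt (msgs : Set (M A V)) (mb : A → Option ℕ) (b : ℕ) (v : V) : Prop :=
  ∀ c < b, ∃ Q, Quorum Q ∧ ∀ a ∈ Q,
    M.msg2b a c v ∈ msgs ∨
    ((∃ m, mb a = some m ∧ c < m) ∧ ∀ v', M.msg2b a c v' ∉ msgs)

/-- The inductive invariant. -/
structure PaxInv (msgs : Set (M A V)) (mb : A → Option ℕ) (mv : A → Option (ℕ × V)) : Prop where
  A2b : ∀ a b v, M.msg2b a b v ∈ msgs →
    M.msg2a b v ∈ msgs ∧ ∃ m, mb a = some m ∧ b ≤ m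
  B2a : ∀ b v v', M.msg2a b v ∈ msgs → M.msg2a b v' ∈ msgs → v = v'
  C2a : ∀ b v, M.msg2a b v ∈ msgs → SafeAt Quorum msgs mb b v
  E1b : ∀ a b w, M.msg1b a b w ∈ msgs →
    (∃ m, mb a = some m ∧ b ≤ m) ∧
    (w = none → ∀ c < b, ∀ v, M.msg2b a c v ∉ msgs) ∧
    (∀ b0 v, w = some (b0, v) → b0 < b ∧ M.msg2b a b0 v ∈ msgs ∧
      ∀ c, b0 < c → c < b → ∀ v', M.msg2b a c v' ∉ msgs)
  Fmv : ∀ a, (mv a = none → ∀ c v, M.msg2b a c v ∉ msgs) ∧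
    (∀ b0 v, mv a = some (b0, v) → M.msg2b a b0 v ∈ msgs ∧
      (∃ m, mb a = some m ∧ b0 ≤ m) ∧ ∀ c, b0 < c → ∀ v', M.msg2b a c v' ∉ msgs)

lemma safeAt_mono {msgs msgs' : Set (M A V)} {mb mb' : A → Option ℕ} {b : ℕ} {v : V}
    (hsub : msgs ⊆ msgs')
    (hmb : ∀ a m, mb a = some m → ∃ m', mb' a = some m' ∧ m ≤ m')
    (hnew : ∀ a c v', M.msg2b a c v' ∈ msgs' → M.msg2b a c v' ∉ msgs →
      ∀ m, mb a = some m → m ≤ c)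
    (h : SafeAt Quorum msgs mb b v) : SafeAt Quorum msgs' mb' b v := by
  intro c hc
  obtain ⟨Q, hQ, hall⟩ := h c hc
  refine ⟨Q, hQ, fun a ha => ?_⟩
  rcases hall a ha with h1 | ⟨⟨m, hm, hcm⟩, hnv⟩
  · exact Or.inl (hsub h1)
  · refine Or.inr ⟨?_, ?_⟩
    · obtain ⟨m', hm', hmm'⟩ := hmb a m hm
      exact ⟨m', hm', lt_of_lt_of_le hcm hmm'⟩
    · intro v' hv'
      by_cases hold : M.msg2b a c v' ∈ msgs
      · exact hnv v' hold
      · have := hnew a c v' hv' hold m hm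
        omega

lemma showsSafe_safeAt {msgs : Set (M A V)} {mb : A → Option ℕ} {mv : A → Option (ℕ × V)}
    (hinv : PaxInv Quorum msgs mb mv)
    {Q : Set A} {b : ℕ} {v : V} (hQ : Quorum Q) (hss : ShowsSafeAt msgs Q b v) :
    SafeAt Quorum msgs mb b v := by
  obtain ⟨hprom, hcase⟩ := hss
  intro c hc
  rcases hcase with hemp | hmax
  · refine ⟨Q, hQ, fun a ha => Or.inr ?_⟩
    obtain ⟨w, hw⟩ := hprom a ha
    have hwnone : w = none := by
      cases w with
      | none => rfl
      | some p =>
        exfalso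
        have hmem : M.msg1b a b (some p) ∈ Q1bv msgs Q b := ⟨hw, a, ha, p, rfl⟩
        rw [hemp] at hmem
        exact hmem
    subst hwnone
    obtain ⟨⟨m, hm, hbm⟩, h2, _⟩ := hinv.E1b a b none hw
    exact ⟨⟨m, hm, lt_of_lt_of_le hc hbm⟩, fun v' => h2 rfl c hc v'⟩
  · obtain ⟨a0, b0, h0, hmaxall⟩ := hmax
    obtain ⟨h0mem, -⟩ := h0
    obtain ⟨-, -, h3⟩ := hinv.E1b a0 b _ h0mem
    obtain ⟨hb0b, hvote0, hint0⟩ := h3 b0 v rfl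
    rcases lt_trichotomy c b0 with hcb0 | hcb0 | hcb0
    · exact hinv.C2a b0 v (hinv.A2b a0 b0 v hvote0).1 c hcb0
    · subst hcb0
      refine ⟨Q, hQ, fun a ha => ?_⟩
      obtain ⟨w, hw⟩ := hprom a ha
      obtain ⟨⟨m, hm, hbm⟩, h2, h3'⟩ := hinv.E1b a b w hw
      cases w with
      | none => exact Or.inr ⟨⟨m, hm, lt_of_lt_of_le hc hbm⟩, fun v' => h2 rfl c hc v'⟩
      | some p =>
        obtain ⟨ba, va⟩ := p
        obtain ⟨hbab, hvotea, hinta⟩ := h3' ba va rfl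
        have hmem : M.msg1b a b (some (ba, va)) ∈ Q1bv msgs Q b := ⟨hw, a, ha, _, rfl⟩
        obtain ⟨a', b', v', heq, hble⟩ := hmaxall _ hmem
        have hinj : a = a' ∧ ba = b' ∧ va = v' := by
          simp only [M.msg1b.injEq, Option.some.injEq, Prod.mk.injEq] at heq
          tauto
        have hbale : ba ≤ c := hinj.2.1 ▸ hble
        rcases lt_or_eq_of_le hbale with hlt | heqc
        · exact Or.inr ⟨⟨m, hm, lt_of_lt_of_le hc hbm⟩,
            fun v'' => hinta c hlt hc v''⟩
        · subst heqc
          have hvv : va = v :=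
            hinv.B2a ba va v (hinv.A2b a ba va hvotea).1 (hinv.A2b a0 ba v hvote0).1
          exact Or.inl (hvv ▸ hvotea)
    · refine ⟨Q, hQ, fun a ha => ?_⟩
      obtain ⟨w, hw⟩ := hprom a ha
      obtain ⟨⟨m, hm, hbm⟩, h2, h3'⟩ := hinv.E1b a b w hw
      cases w with
      | none => exact Or.inr ⟨⟨m, hm, lt_of_lt_of_le hc hbm⟩, fun v' => h2 rfl c hc v'⟩
      | some p =>
        obtain ⟨ba, va⟩ := p
        obtain ⟨hbab, hvotea, hinta⟩ := h3' ba va rfl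
        have hmem : M.msg1b a b (some (ba, va)) ∈ Q1bv msgs Q b := ⟨hw, a, ha, _, rfl⟩
        obtain ⟨a', b', v', heq, hble⟩ := hmaxall _ hmem
        have hinj : ba = b' := by
          simp only [M.msg1b.injEq, Option.some.injEq, Prod.mk.injEq] at heq
          tauto
        have hbac : ba < c := lt_of_le_of_lt (hinj ▸ hble) hcb0
        exact Or.inr ⟨⟨m, hm, lt_of_lt_of_le hc hbm⟩, fun v'' => hinta c hbac hc v''⟩

lemma inv_init : PaxInv Quorum (∅ : Set (M A V)) (fun _ => none) (fun _ => none) := by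
  constructor
  · intro a b v h; exact absurd h (Set.notMem_empty _)
  · intro b v v' h; exact absurd h (Set.notMem_empty _)
  · intro b v h; exact absurd h (Set.notMem_empty _)
  · intro a b w h; exact absurd h (Set.notMem_empty _)
  · intro a
    exact ⟨fun _ c v h => Set.notMem_empty _ h,
      fun b0 v h => by simp at h⟩

lemma inv_step {s s' : SDPState A V} (hstep : SDPStep Quorum s s')
    (hinv : PaxInv Quorum s.1 s.2.1 s.2.2) : PaxInv Quorum s'.1 s'.2.1 s'.2.2 := by
  obtain ⟨hA, hB, hC, hE, hF⟩ := hinv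
  cases hstep with
  | phase1a msgs mb mv b =>
    constructor
    · intro a c v h
      rcases h with h | h
      · obtain ⟨h2a, hm⟩ := hA a c v h
        exact ⟨Set.mem_union_left _ h2a, hm⟩
      · simp at h
    · intro c v v' h h'
      rcases h with h | h
      · rcases h' with h' | h'
        · exact hB c v v' h h'
        · simp at h'
      · simp at h
    · intro c v h
      rcases h with h | h
      · refine safeAt_mono Quorum (Set.subset_union_left) (fun a m hm => ⟨m, hm, le_refl m⟩)
          ?_ (hC c v h)
        intro a c' v' h' hold m hm
        rcases h' with h' | h'
        · exact absurd h' hold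
        · simp at h'
      · simp at h
    · intro a c w h
      rcases h with h | h
      · obtain ⟨h1, h2, h3⟩ := hE a c w h
        refine ⟨h1, ?_, ?_⟩
        · intro hw c' hc' v hmem
          rcases hmem with hmem | hmem
          · exact h2 hw c' hc' v hmem
          · simp at hmem
        · intro b0 v hw
          obtain ⟨g1, g2, g3⟩ := h3 b0 v hw
          refine ⟨g1, Set.mem_union_left _ g2, ?_⟩
          intro c' hc1 hc2 v' hmem
          rcases hmem with hmem | hmem
          · exact g3 c' hc1 hc2 v' hmem
          · simp at hmem
      · simp at h
    · intro a
      obtain ⟨f1, f2⟩ := hF a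
      refine ⟨?_, ?_⟩
      · intro hn c v hmem
        rcases hmem with hmem | hmem
        · exact f1 hn c v hmem
        · simp at hmem
      · intro b0 v hv
        obtain ⟨g1, g2, g3⟩ := f2 b0 v hv
        refine ⟨Set.mem_union_left _ g1, g2, ?_⟩
        intro c hc v' hmem
        rcases hmem with hmem | hmem
        · exact g3 c hc v' hmem
        · simp at hmem
  | phase1b msgs mb mv a b h1 h2 =>
    have hmbmono : ∀ a' m, mb a' = some m →
        ∃ m', Function.update mb a (some b) a' = some m' ∧ m ≤ m' := by
      intro a' m hm
      by_cases ha' : a' = a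
      · subst ha'
        rw [hm] at h2
        exact ⟨b, by simp, le_of_lt h2⟩
      · exact ⟨m, by simp [Function.update_apply, ha', hm], le_refl m⟩
    constructor
    · intro a' c v h
      rcases h with h | h
      · obtain ⟨h2a, m, hm, hle⟩ := hA a' c v h
        obtain ⟨m', hm', hmm'⟩ := hmbmono a' m hm
        exact ⟨Set.mem_union_left _ h2a, m', hm', le_trans hle hmm'⟩
      · simp at h
    · intro c v v' h h'
      rcases h with h | h
      · rcases h' with h' | h'
        · exact hB c v v' h h'
        · simp at h'
      · simp at h
    · intro c v h
      rcases h with h | h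
      · refine safeAt_mono Quorum (Set.subset_union_left) hmbmono ?_ (hC c v h)
        intro a' c' v' h' hold m hm
        rcases h' with h' | h'
        · exact absurd h' hold
        · simp at h'
      · simp at h
    · intro a' c w h
      rcases h with h | h
      · obtain ⟨⟨m, hm, hle⟩, h2', h3⟩ := hE a' c w h
        obtain ⟨m', hm', hmm'⟩ := hmbmono a' m hm
        refine ⟨⟨m', hm', le_trans hle hmm'⟩, ?_, ?_⟩
        · intro hw c' hc' v hmem
          rcases hmem with hmem | hmem
          · exact h2' hw c' hc' v hmem
          · simp at hmem
        · intro b0 v hw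
          obtain ⟨g1, g2, g3⟩ := h3 b0 v hw
          refine ⟨g1, Set.mem_union_left _ g2, ?_⟩
          intro c' hc1 hc2 v' hmem
          rcases hmem with hmem | hmem
          · exact g3 c' hc1 hc2 v' hmem
          · simp at hmem
      · -- new 1b message
        simp only [Set.mem_singleton_iff, M.msg1b.injEq] at h
        obtain ⟨ha', hb', hw'⟩ := h
        subst ha'; subst hb'; subst hw'
        obtain ⟨f1, f2⟩ := hF a'
        refine ⟨⟨c, by simp, le_refl c⟩, ?_, ?_⟩
        · intro hn c' hc' v hmem
          rcases hmem with hmem | hmem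
          · exact f1 hn c' v hmem
          · simp at hmem
        · intro b0 v hw
          obtain ⟨g1, ⟨m, hm, hb0m⟩, g3⟩ := f2 b0 v hw
          have hmc : mb a' = some m := hm
          rw [hmc] at h2
          refine ⟨lt_of_le_of_lt hb0m h2, Set.mem_union_left _ g1, ?_⟩
          intro c' hc1 hc2 v' hmem
          rcases hmem with hmem | hmem
          · exact g3 c' hc1 v' hmem
          · simp at hmem
    · intro a'
      obtain ⟨f1, f2⟩ := hF a'
      refine ⟨?_, ?_⟩
      · intro hn c v hmem
        rcases hmem with hmem | hmem
        · exact f1 hn c v hmem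
        · simp at hmem
      · intro b0 v hv
        obtain ⟨g1, ⟨m, hm, hb0m⟩, g3⟩ := f2 b0 v hv
        obtain ⟨m', hm', hmm'⟩ := hmbmono a' m hm
        refine ⟨Set.mem_union_left _ g1, ⟨m', hm', le_trans hb0m hmm'⟩, ?_⟩
        intro c hc v' hmem
        rcases hmem with hmem | hmem
        · exact g3 c hc v' hmem
        · simp at hmem
  | phase2a msgs mb mv b v Q h1 h2 h3 =>
    have hinv' : PaxInv Quorum msgs mb mv := ⟨hA, hB, hC, hE, hF⟩
    have hmono : ∀ (c : ℕ) (v' : V), SafeAt Quorum msgs mb c v' →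
        SafeAt Quorum (msgs ∪ {M.msg2a b v}) mb c v' := by
      intro c v' hs
      refine safeAt_mono Quorum (Set.subset_union_left) (fun a m hm => ⟨m, hm, le_refl m⟩)
        ?_ hs
      intro a' c' v'' h' hold m hm
      rcases h' with h' | h'
      · exact absurd h' hold
      · simp at h'
    constructor
    · intro a c v' h
      rcases h with h | h
      · obtain ⟨h2a, hm⟩ := hA a c v' h
        exact ⟨Set.mem_union_left _ h2a, hm⟩
      · simp at h
    · intro c va vb h h'
      rcases h with h | h <;> rcases h' with h' | h'
      · exact hB c va vb h h'
      · simp only [Set.mem_singleton_iff, M.msg2a.injEq] at h'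
        exact absurd ⟨va, h'.1 ▸ h⟩ h1
      · simp only [Set.mem_singleton_iff, M.msg2a.injEq] at h
        exact absurd ⟨vb, h.1 ▸ h'⟩ h1
      · simp only [Set.mem_singleton_iff, M.msg2a.injEq] at h h'
        rw [h.2, h'.2]
    · intro c v' h
      rcases h with h | h
      · exact hmono c v' (hC c v' h)
      · simp only [Set.mem_singleton_iff, M.msg2a.injEq] at h
        obtain ⟨hc, hv⟩ := h
        subst hc; subst hv
        exact hmono c v' (showsSafe_safeAt Quorum hinv' h2 h3)
    · intro a c w h
      rcases h with h | h
      · obtain ⟨hm, h2', h3'⟩ := hE a c w h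
        refine ⟨hm, ?_, ?_⟩
        · intro hw c' hc' v' hmem
          rcases hmem with hmem | hmem
          · exact h2' hw c' hc' v' hmem
          · simp at hmem
        · intro b0 v' hw
          obtain ⟨g1, g2, g3⟩ := h3' b0 v' hw
          refine ⟨g1, Set.mem_union_left _ g2, ?_⟩
          intro c' hc1 hc2 v'' hmem
          rcases hmem with hmem | hmem
          · exact g3 c' hc1 hc2 v'' hmem
          · simp at hmem
      · simp at h
    · intro a
      obtain ⟨f1, f2⟩ := hF a
      refine ⟨?_, ?_⟩
      · intro hn c v' hmem
        rcases hmem with hmem | hmem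
        · exact f1 hn c v' hmem
        · simp at hmem
      · intro b0 v' hv
        obtain ⟨g1, g2, g3⟩ := f2 b0 v' hv
        refine ⟨Set.mem_union_left _ g1, g2, ?_⟩
        intro c hc v'' hmem
        rcases hmem with hmem | hmem
        · exact g3 c hc v'' hmem
        · simp at hmem
  | phase2b msgs mb mv a b v h1 h2 =>
    have hmbmono : ∀ a' m, mb a' = some m →
        ∃ m', Function.update mb a (some b) a' = some m' ∧ m ≤ m' := by
      intro a' m hm
      by_cases ha' : a' = a
      · subst ha'
        rw [hm] at h2
        exact ⟨b, by simp, h2⟩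
      · exact ⟨m, by simp [Function.update_apply, ha', hm], le_refl m⟩
    constructor
    · intro a' c v' h
      rcases h with h | h
      · obtain ⟨h2a, m, hm, hle⟩ := hA a' c v' h
        obtain ⟨m', hm', hmm'⟩ := hmbmono a' m hm
        exact ⟨Set.mem_union_left _ h2a, m', hm', le_trans hle hmm'⟩
      · simp only [Set.mem_singleton_iff, M.msg2b.injEq] at h
        obtain ⟨ha', hb', hv'⟩ := h
        subst ha'; subst hb'; subst hv'
        exact ⟨Set.mem_union_left _ h1, c, by simp, le_refl c⟩
    · intro c va vb h h'
      rcases h with h | h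
      · rcases h' with h' | h'
        · exact hB c va vb h h'
        · simp at h'
      · simp at h
    · intro c v' h
      rcases h with h | h
      · refine safeAt_mono Quorum (Set.subset_union_left) hmbmono ?_ (hC c v' h)
        intro a' c' v'' h' hold m hm
        rcases h' with h' | h'
        · exact absurd h' hold
        · simp only [Set.mem_singleton_iff, M.msg2b.injEq] at h'
          obtain ⟨ha', hb', hv''⟩ := h'
          subst ha'; subst hb'
          rw [hm] at h2
          exact h2
      · simp at h
    · intro a' c w h
      rcases h with h | h
      · obtain ⟨⟨m, hm, hle⟩, h2', h3'⟩ := hE a' c w h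
        obtain ⟨m', hm', hmm'⟩ := hmbmono a' m hm
        -- key fact: if a' = a then c ≤ b
        have hkey : a' = a → c ≤ b := by
          intro ha'
          subst ha'
          have hmc : mb a' = some m := hm
          rw [hmc] at h2
          exact le_trans hle h2
        refine ⟨⟨m', hm', le_trans hle hmm'⟩, ?_, ?_⟩
        · intro hw c' hc' v'' hmem
          rcases hmem with hmem | hmem
          · exact h2' hw c' hc' v'' hmem
          · simp only [Set.mem_singleton_iff, M.msg2b.injEq] at hmem
            obtain ⟨ha', hb', hv''⟩ := hmem
            have := hkey ha'
            omega
        · intro b0 v'' hw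
          obtain ⟨g1, g2, g3⟩ := h3' b0 v'' hw
          refine ⟨g1, Set.mem_union_left _ g2, ?_⟩
          intro c' hc1 hc2 v3 hmem
          rcases hmem with hmem | hmem
          · exact g3 c' hc1 hc2 v3 hmem
          · simp only [Set.mem_singleton_iff, M.msg2b.injEq] at hmem
            obtain ⟨ha', hb', hv3⟩ := hmem
            have := hkey ha'
            omega
      · simp at h
    · intro a'
      by_cases ha' : a' = a
      · subst ha'
        refine ⟨?_, ?_⟩
        · intro hn
          simp at hn
        · intro b0 v' hv
          simp only [Function.update_self, Option.some.injEq, Prod.mk.injEq] at hv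
          obtain ⟨hb0, hv'⟩ := hv
          subst hb0; subst hv'
          refine ⟨Set.mem_union_right _ rfl, ⟨b, by simp, le_refl b⟩, ?_⟩
          intro c hc v'' hmem
          rcases hmem with hmem | hmem
          · obtain ⟨-, m, hm, hle⟩ := hA a' c v'' hmem
            have hmc : mb a' = some m := hm
            rw [hmc] at h2
            have : m ≤ b := h2
            omega
          · simp only [Set.mem_singleton_iff, M.msg2b.injEq] at hmem
            omega
      · obtain ⟨f1, f2⟩ := hF a'
        refine ⟨?_, ?_⟩
        · intro hn c v' hmem
          have hn2 : Function.update mv a (some (b, v)) a' = none := hn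
          rw [Function.update_of_ne ha'] at hn2
          have hn := hn2
          rcases hmem with hmem | hmem
          · exact f1 hn c v' hmem
          · simp only [Set.mem_singleton_iff, M.msg2b.injEq] at hmem
            exact ha' hmem.1
        · intro b0 v' hv
          have hv2 : Function.update mv a (some (b, v)) a' = some (b0, v') := hv
          rw [Function.update_of_ne ha'] at hv2
          have hv := hv2
          obtain ⟨g1, ⟨m, hm, hb0m⟩, g3⟩ := f2 b0 v' hv
          obtain ⟨m', hm', hmm'⟩ := hmbmono a' m hm
          refine ⟨Set.mem_union_left _ g1, ⟨m', hm', le_trans hb0m hmm'⟩, ?_⟩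
          intro c hc v'' hmem
          rcases hmem with hmem | hmem
          · exact g3 c hc v'' hmem
          · simp only [Set.mem_singleton_iff, M.msg2b.injEq] at hmem
            exact ha' hmem.1

end PaxosProof

/-- Consistency of the single-decree Paxos model: if a state is reachable from the initial
state and both `v1` and `v2` are chosen, then `v1 = v2`. -/
theorem sdp_consistency {A V : Type} [DecidableEq A] (Quorum : Set A → Prop)
    (hQ : ∀ Q1 Q2 : Set A, Quorum Q1 → Quorum Q2 → ∃ a, a ∈ Q1 ∧ a ∈ Q2)
    (msgs : Set (M A V)) (maxBal : A → Option ℕ) (maxVal : A → Option (ℕ × V))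
    (v1 v2 : V)
    (hreach : Relation.ReflTransGen (SDPStep Quorum) (SDPInit A V) (msgs, maxBal, maxVal))
    (h1 : Chosen Quorum msgs v1) (h2 : Chosen Quorum msgs v2) :
    v1 = v2 := by
  have hinv : PaxInv Quorum msgs maxBal maxVal := by
    have hgen : ∀ s' : SDPState A V,
        Relation.ReflTransGen (SDPStep Quorum) (SDPInit A V) s' →
        PaxInv Quorum s'.1 s'.2.1 s'.2.2 := by
      intro s' h
      induction h with
      | refl => exact inv_init Quorum
      | tail _ hstep ih => exact inv_step Quorum hstep ih
    exact hgen (msgs, maxBal, maxVal) hreach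
  have same : ∀ (a a' : A) (c : ℕ) (w w' : V),
      M.msg2b a c w ∈ msgs → M.msg2b a' c w' ∈ msgs → w = w' := by
    intro a a' c w w' h h'
    exact hinv.B2a c w w' (hinv.A2b a c w h).1 (hinv.A2b a' c w' h').1
  have key : ∀ (u1 u2 : V) (b1 b2 : ℕ) (Q1 Q2 : Set A), Quorum Q1 → Quorum Q2 →
      (∀ a ∈ Q1, M.msg2b a b1 u1 ∈ msgs) → (∀ a ∈ Q2, M.msg2b a b2 u2 ∈ msgs) →
      b1 < b2 → u1 = u2 := by
    intro u1 u2 b1 b2 Q1 Q2 hQ1 hQ2 hv1 hv2 hlt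
    obtain ⟨a2, ha2, -⟩ := hQ Q2 Q2 hQ2 hQ2
    have h2a : M.msg2a b2 u2 ∈ msgs := (hinv.A2b a2 b2 u2 (hv2 a2 ha2)).1
    obtain ⟨Q, hQ', hall⟩ := hinv.C2a b2 u2 h2a b1 hlt
    obtain ⟨a, haQ, haQ1⟩ := hQ Q Q1 hQ' hQ1
    rcases hall a haQ with hh | ⟨-, hnv⟩
    · exact same a a b1 u1 u2 (hv1 a haQ1) hh
    · exact absurd (hv1 a haQ1) (hnv u1)
  obtain ⟨b1, Q1, hQ1, hv1⟩ := h1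
  obtain ⟨b2, Q2, hQ2, hv2⟩ := h2
  rcases lt_trichotomy b1 b2 with h | h | h
  · exact key v1 v2 b1 b2 Q1 Q2 hQ1 hQ2 hv1 hv2 h
  · subst h
    obtain ⟨a, ha1, ha2⟩ := hQ Q1 Q2 hQ1 hQ2
    exact same a a b1 v1 v2 (hv1 a ha1) (hv2 a ha2)
  · exact (key v2 v1 b2 b1 Q2 Q1 hQ2 hQ1 hv2 hv1 h).symm
end

section
/- Refinement of the lifted Paxos model: if initL →SDPL* (ctr, s) (reflexive-transitive closure of the lifted transition relation starting from the lifted initial state), then init →SDP* s. -/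
/-- The transition relation of the lifted single-decree Paxos model over `n` proposers. -/
inductive SDPLStep {A V : Type} [DecidableEq A] (Quorum : Set A → Prop) (n : ℕ) :
    ((Fin n → ℕ) × SDPState A V) → ((Fin n → ℕ) × SDPState A V) → Prop where
  | inc (ctr : Fin n → ℕ) (s : SDPState A V) (p : Fin n) :
      SDPLStep Quorum n (ctr, s) (Function.update ctr p (ctr p + 1), s)
  | ruleA (ctr : Fin n → ℕ) (msgs : Set (M A V)) (mb : A → Option ℕ)
      (mv : A → Option (ℕ × V)) (m : M A V) (p : Fin n) (k : ℕ)
      (hstep : SDPStep Quorum (msgs, mb, mv) (msgs ∪ {m}, mb, mv))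
      (hk : ctr p = k)
      (hm : m = M.msg1a (k * n + p.val) ∨ ∃ v, m = M.msg2a (k * n + p.val) v) :
      SDPLStep Quorum n (ctr, (msgs, mb, mv)) (ctr, (msgs ∪ {m}, mb, mv))
  | ruleB (ctr : Fin n → ℕ) (msgs : Set (M A V)) (mb mb' : A → Option ℕ)
      (mv mv' : A → Option (ℕ × V)) (m : M A V)
      (hstep : SDPStep Quorum (msgs, mb, mv) (msgs ∪ {m}, mb', mv'))
      (hm : (∃ a b w, m = M.msg1b a b w) ∨ (∃ a b v, m = M.msg2b a b v)) :
      SDPLStep Quorum n (ctr, (msgs, mb, mv)) (ctr, (msgs ∪ {m}, mb', mv'))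

/-- The initial state of the lifted single-decree Paxos model. -/
def SDPLInit (A V : Type) (n : ℕ) : (Fin n → ℕ) × SDPState A V :=
  (fun _ => 0, SDPInit A V)

/-- Refinement of the lifted Paxos model: any SDP state reachable in the lifted model from
the lifted initial state is reachable in the SDP model from the initial state. -/
theorem sdpl_refinement {A V : Type} [DecidableEq A] (Quorum : Set A → Prop)
    (n : ℕ) (hn : 0 < n) (ctr : Fin n → ℕ) (s : SDPState A V)
    (hreach : Relation.ReflTransGen (SDPLStep Quorum n) (SDPLInit A V n) (ctr, s)) :
    Relation.ReflTransGen (SDPStep Quorum) (SDPInit A V) s := by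
  have key : ∀ x y : (Fin n → ℕ) × SDPState A V, SDPLStep Quorum n x y →
      Relation.ReflTransGen (SDPStep Quorum) x.2 y.2 := by
    intro x y h
    cases h with
    | inc ctr s p => exact Relation.ReflTransGen.refl
    | ruleA ctr msgs mb mv m p k hstep hk hm => exact Relation.ReflTransGen.single hstep
    | ruleB ctr msgs mb mb' mv mv' m hstep hm => exact Relation.ReflTransGen.single hstep
  have gen : ∀ y, Relation.ReflTransGen (SDPLStep Quorum n) (SDPLInit A V n) y →
      Relation.ReflTransGen (SDPStep Quorum) (SDPLInit A V n).2 y.2 := by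
    intro y h
    induction h with
    | refl => exact Relation.ReflTransGen.refl
    | tail hab hbc ih => exact ih.trans (key _ _ hbc)
  exact gen (ctr, s) hreach
end

section
/- Per-ballot invariants of the single-decree Paxos model: if init →SDP* (msgs, maxBal, maxVal), then (i) for every ballot b, if msg2a b v ∈ msgs and msg2a b v' ∈ msgs then v = v'; (ii) if msg2b a b v ∈ msgs then msg2a b v ∈ msgs. Consequently, if msg2b a1 b v1 ∈ msgs and msg2b a2 b v2 ∈ msgs (same ballot b), then v1 = v2. -/
def SDPInv {A V : Type} (msgs : Set (M A V)) : Prop :=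
  (∀ (b : ℕ) (v v' : V), M.msg2a b v ∈ msgs → M.msg2a b v' ∈ msgs → v = v') ∧
  (∀ (a : A) (b : ℕ) (v : V), M.msg2b a b v ∈ msgs → M.msg2a b v ∈ msgs)

lemma sdp_inv_aux {A V : Type} [DecidableEq A] (Quorum : Set A → Prop)
    (s : SDPState A V)
    (hreach : Relation.ReflTransGen (SDPStep Quorum) (SDPInit A V) s) :
    SDPInv s.1 := by
  induction hreach with
  | refl => exact ⟨fun b v v' h => h.elim, fun a b v h => h.elim⟩
  | tail hst step ih =>
    obtain ⟨ih1, ih2⟩ := ih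
    cases step with
    | phase1a msgs mb mv b =>
      exact ⟨fun b v v' h h' => ih1 b v v' (h.resolve_right (by simp)) (h'.resolve_right (by simp)),
        fun a b v h => Or.inl (ih2 a b v (h.resolve_right (by simp)))⟩
    | phase1b msgs mb mv a b h1 h2 =>
      exact ⟨fun b v v' h h' => ih1 b v v' (h.resolve_right (by simp)) (h'.resolve_right (by simp)),
        fun a b v h => Or.inl (ih2 a b v (h.resolve_right (by simp)))⟩
    | phase2a msgs mb mv b v Q h1 h2 h3 =>
      constructor
      · rintro b' w w' (h | h) (h' | h')
        · exact ih1 b' w w' h h'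
        · simp only [Set.mem_singleton_iff, M.msg2a.injEq] at h'
          exact absurd ⟨w, h'.1 ▸ h⟩ h1
        · simp only [Set.mem_singleton_iff, M.msg2a.injEq] at h
          exact absurd ⟨w', h.1 ▸ h'⟩ h1
        · simp only [Set.mem_singleton_iff, M.msg2a.injEq] at h h'
          exact h.2.trans h'.2.symm
      · intro a b' w h
        exact Or.inl (ih2 a b' w (h.resolve_right (by simp)))
    | phase2b msgs mb mv a b v h1 h2 =>
      constructor
      · intro b' w w' h h'
        exact ih1 b' w w' (h.resolve_right (by simp)) (h'.resolve_right (by simp))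
      · rintro a' b' w (h | h)
        · exact Or.inl (ih2 a' b' w h)
        · simp only [Set.mem_singleton_iff, M.msg2b.injEq] at h
          exact Or.inl (h.2.1 ▸ h.2.2 ▸ h1)

/-- Per-ballot invariants of the single-decree Paxos model: in any reachable state,
(i) at most one value is 2a-proposed per ballot; (ii) every accepted (`msg2b`) value was
proposed (`msg2a`); consequently any two `msg2b` messages for the same ballot carry the
same value. -/
theorem sdp_per_ballot_invariants {A V : Type} [DecidableEq A] (Quorum : Set A → Prop)
    (msgs : Set (M A V)) (maxBal : A → Option ℕ) (maxVal : A → Option (ℕ × V))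
    (hreach : Relation.ReflTransGen (SDPStep Quorum) (SDPInit A V) (msgs, maxBal, maxVal)) :
    (∀ (b : ℕ) (v v' : V), M.msg2a b v ∈ msgs → M.msg2a b v' ∈ msgs → v = v') ∧
    (∀ (a : A) (b : ℕ) (v : V), M.msg2b a b v ∈ msgs → M.msg2a b v ∈ msgs) ∧
    (∀ (a1 a2 : A) (b : ℕ) (v1 v2 : V),
      M.msg2b a1 b v1 ∈ msgs → M.msg2b a2 b v2 ∈ msgs → v1 = v2) := by
  have h := sdp_inv_aux Quorum (msgs, maxBal, maxVal) hreach
  obtain ⟨h1, h2⟩ := h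
  exact ⟨h1, h2, fun a1 a2 b v1 v2 hb1 hb2 => h1 b v1 v2 (h2 a1 b v1 hb1) (h2 a2 b v2 hb2)⟩
end

section
/- Eventual consistency of the G-Counter model: for every GC-valid pair (τ, μ) of a finite trace τ and a possibly-infinite trace μ of G-Counter model states, if ModelFair(τ, μ) holds then ModelEvCons(τ, μ) holds, i.e., for every vector v, a stability point for v implies a convergence point for v. -/
/-- A G-Counter model state over `n` replicas: row `δ i` is replica `i`'s local vector. -/
abbrev GCState (n : ℕ) := Fin n → Fin n → ℕ

/-- Pointwise order on vectors. -/
def vle {n : ℕ} (u v : Fin n → ℕ) : Prop := ∀ l, u l ≤ v l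

/-- Pointwise maximum of vectors. -/
def vsup {n : ℕ} (u v : Fin n → ℕ) : Fin n → ℕ := fun l => max (u l) (v l)

/-- The transition relation of the G-Counter model. -/
inductive GCStep (n : ℕ) : GCState n → GCState n → Prop where
  | incr (δ : GCState n) (i : Fin n) :
      GCStep n δ (Function.update δ i (Function.update (δ i) i (δ i i + 1)))
  | apply (δ : GCState n) (i j : Fin n) (v : Fin n → ℕ) (h : vle v (δ j)) :
      GCStep n δ (Function.update δ i (vsup (δ i) v))

/-- `unroll k τ μ`: the finite trace `τ` with the first `k` elements of the
possibly-infinite trace `μ` appended (or all of `μ` if it has fewer than `k` elements). -/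
def unroll {X : Type} (k : ℕ) (τ : FinTrace X) (μ : Stream'.Seq X) : FinTrace X :=
  ⟨τ.head, τ.tail ++ Stream'.Seq.take k μ⟩

/-- `(τ, μ)` is GC-valid: any two consecutive states of the combined sequence (the states
of `τ` followed by those of `μ`) are equal or related by a G-Counter step. -/
def GCValid (n : ℕ) (τ : FinTrace (GCState n)) (μ : Stream'.Seq (GCState n)) : Prop :=
  ∀ k, List.Chain' (fun a b => a = b ∨ GCStep n a b)
    ((unroll k τ μ).head :: (unroll k τ μ).tail)

/-- Model fairness: the current state of replica `i` is always eventually merged into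
replica `j`. -/
def ModelFair (n : ℕ) (τ : FinTrace (GCState n)) (μ : Stream'.Seq (GCState n)) : Prop :=
  ∀ (i j : Fin n) (k : ℕ), ∃ k', vle ((unroll k τ μ).lst i) ((unroll k' τ μ).lst j)

/-- A stability point for `v`: from some point on, the diagonal is exactly `v`. -/
def ModelStab (n : ℕ) (v : Fin n → ℕ)
    (τ : FinTrace (GCState n)) (μ : Stream'.Seq (GCState n)) : Prop :=
  ∃ k, ∀ (k' : ℕ) (i : Fin n), (unroll (k + k') τ μ).lst i i = v i

/-- A convergence point for `v`: from some point on, every local state is exactly `v`. -/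
def ModelConv (n : ℕ) (v : Fin n → ℕ)
    (τ : FinTrace (GCState n)) (μ : Stream'.Seq (GCState n)) : Prop :=
  ∃ k, ∀ (k' : ℕ) (i : Fin n), (unroll (k + k') τ μ).lst i = v

/-- Eventual consistency: every stability point yields a convergence point. -/
def ModelEvCons (n : ℕ) (τ : FinTrace (GCState n)) (μ : Stream'.Seq (GCState n)) : Prop :=
  ∀ v : Fin n → ℕ, ModelStab n v τ μ → ModelConv n v τ μ


open Stream'

lemma seq_take_succ' {α : Type*} (k : ℕ) (μ : Seq α) :
    μ.take (k + 1) = μ.take k ++ (μ.get? k).toList := by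
  induction k generalizing μ with
  | zero =>
    cases h : μ.destruct with
    | none => rw [Seq.destruct_eq_none h]; simp [Seq.take]
    | some a =>
      obtain ⟨x, r⟩ := a
      rw [Seq.destruct_eq_cons h]
      simp [Seq.take, Seq.destruct_cons]
  | succ k ih =>
    cases h : μ.destruct with
    | none => rw [Seq.destruct_eq_none h]; simp [Seq.take]
    | some a =>
      obtain ⟨x, r⟩ := a
      rw [Seq.destruct_eq_cons h]
      have hc : ∀ (m : ℕ) (x : α) (r : Seq α),
          Seq.take (m+1) (Seq.cons x r) = x :: Seq.take m r := fun m x r => by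
        rw [Seq.take, Seq.destruct_cons]
      rw [hc, hc, Seq.get?_cons_succ, ih]
      rfl

lemma getLast?_cons' {α : Type*} (a : α) (l : List α) :
    (a :: l).getLast? = some (l.getLast?.getD a) := by
  cases l with
  | nil => rfl
  | cons b t =>
    rw [List.getLast?_cons_cons]
    obtain ⟨y, hy⟩ := Option.isSome_iff_exists.mp
      (List.getLast?_isSome.mpr (List.cons_ne_nil b t))
    simp [hy]

lemma gcstep_mono {n : ℕ} {a b : GCState n} (h : GCStep n a b) (i l : Fin n) :
    a i l ≤ b i l := by
  cases h with
  | incr j =>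
    rcases eq_or_ne i j with rfl | hij
    · rcases eq_or_ne l i with rfl | hl
      · simp
      · simp [Function.update_apply, hl]
    · simp [Function.update_apply, hij]
  | apply j j' w hw =>
    rcases eq_or_ne i j with rfl | hij
    · simp [Function.update_apply, vsup]
    · simp [Function.update_apply, hij]

lemma unroll_step {n : ℕ} (τ : FinTrace (GCState n)) (μ : Seq (GCState n))
    (hvalid : GCValid n τ μ) (k : ℕ) :
    (unroll (k+1) τ μ).lst = (unroll k τ μ).lst ∨
      GCStep n ((unroll k τ μ).lst) ((unroll (k+1) τ μ).lst) := by
  cases h : μ.get? k with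
  | none =>
    left
    simp [unroll, FinTrace.lst, seq_take_succ', h]
  | some x =>
    have htake : μ.take (k+1) = μ.take k ++ [x] := by rw [seq_take_succ', h]; rfl
    have hchain := hvalid (k+1)
    rw [unroll] at hchain
    simp only [htake] at hchain
    have hsplit : τ.head :: (τ.tail ++ (μ.take k ++ [x]))
        = (τ.head :: (τ.tail ++ μ.take k)) ++ [x] := by simp
    rw [hsplit] at hchain
    obtain ⟨-, -, hrel⟩ := List.isChain_append.mp hchain
    have hlast : (τ.head :: (τ.tail ++ μ.take k)).getLast? = some ((unroll k τ μ).lst) := by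
      rw [getLast?_cons']; rfl
    have hR := hrel _ hlast x rfl
    have hlst : (unroll (k+1) τ μ).lst = x := by
      simp [unroll, FinTrace.lst, htake, ← List.append_assoc, List.getLast?_concat]
    rw [hlst]
    exact hR.imp Eq.symm id

lemma unroll_mono {n : ℕ} (τ : FinTrace (GCState n)) (μ : Seq (GCState n))
    (hvalid : GCValid n τ μ) {k k' : ℕ} (hk : k ≤ k') (i l : Fin n) :
    (unroll k τ μ).lst i l ≤ (unroll k' τ μ).lst i l := by
  induction k', hk using Nat.le_induction with
  | base => rfl
  | succ m hm ih =>
    refine ih.trans ?_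
    rcases unroll_step τ μ hvalid m with h | h
    · rw [h]
    · exact gcstep_mono h i l

/-- Eventual consistency of the G-Counter model: every GC-valid, model-fair pair of traces
is eventually consistent. -/
theorem gcounter_model_eventual_consistency (n : ℕ)
    (τ : FinTrace (GCState n)) (μ : Stream'.Seq (GCState n))
    (hvalid : GCValid n τ μ) (hfair : ModelFair n τ μ) :
    ModelEvCons n τ μ := by
  intro v hstab
  obtain ⟨k0, hstab⟩ := hstab
  have diag : ∀ k, k0 ≤ k → ∀ i : Fin n, (unroll k τ μ).lst i i = v i := by
    intro k hk i
    have := hstab (k - k0) i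
    rwa [Nat.add_sub_cancel' hk] at this
  have upper : ∀ (k : ℕ) (i l : Fin n), (unroll k τ μ).lst i l ≤ v l := by
    intro k i l
    obtain ⟨k', hk'⟩ := hfair i l k
    calc (unroll k τ μ).lst i l ≤ (unroll k' τ μ).lst l l := hk' l
      _ ≤ (unroll (max k' k0) τ μ).lst l l := unroll_mono τ μ hvalid (le_max_left _ _) l l
      _ = v l := diag _ (le_max_right _ _) l
  have lower : ∀ p : Fin n × Fin n, ∃ K, ∀ k, K ≤ k →
      v p.2 ≤ (unroll k τ μ).lst p.1 p.2 := by
    rintro ⟨i, l⟩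
    obtain ⟨k', hk'⟩ := hfair l i k0
    refine ⟨k', fun k hk => ?_⟩
    have h1 : v l = (unroll k0 τ μ).lst l l := (diag k0 le_rfl l).symm
    have h2 := hk' l
    have h3 := unroll_mono τ μ hvalid hk i l
    simp only at h1 h2 h3 ⊢
    omega
  choose K hK using lower
  refine ⟨Finset.univ.sup K, fun k' i => funext fun l => le_antisymm (upper _ i l) ?_⟩
  exact hK (i, l) _ ((Finset.le_sup (Finset.mem_univ (i, l))).trans (Nat.le_add_right _ _))
end

section
/- Diagonal-domination invariant of the G-Counter model: if δ0 →GC* δ, where δ0 is the all-zero matrix and →GC* is the reflexive-transitive closure of the G-Counter transition relation, then for all replicas i and j, δ i j ≤ δ j j (every replica's view of replica j's count never exceeds replica j's own count). -/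
/-- Diagonal-domination invariant of the G-Counter model: in any state reachable from the
all-zero matrix, every replica's view of replica `j`'s count never exceeds replica `j`'s
own count. -/
theorem gcounter_diagonal_domination (n : ℕ) (δ : GCState n)
    (hreach : Relation.ReflTransGen (GCStep n) (fun _ _ => 0) δ) :
    ∀ i j : Fin n, δ i j ≤ δ j j := by
  induction hreach with
  | refl => intro i j; exact le_refl 0
  | tail hab hstep ih =>
    rename_i b c
    intro i j
    cases hstep with
    | incr k =>
      rcases eq_or_ne i k with rfl | hik
      · rcases eq_or_ne j i with rfl | hjk
        · exact le_refl _
        · rw [Function.update_self, Function.update_of_ne hjk,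
            Function.update_of_ne hjk]
          exact ih i j
      · rcases eq_or_ne j k with rfl | hjk
        · rw [Function.update_of_ne hik, Function.update_self,
            Function.update_self]
          exact le_trans (ih i j) (Nat.le_succ _)
        · rw [Function.update_of_ne hik, Function.update_of_ne hjk]
          exact ih i j
    | apply k m v hv =>
      have hvj : v j ≤ b j j := le_trans (hv j) (ih m j)
      rcases eq_or_ne i k with rfl | hik
      · rcases eq_or_ne j i with rfl | hjk
        · exact le_refl _
        · rw [Function.update_self, Function.update_of_ne hjk]
          exact max_le (ih i j) hvj
      · rcases eq_or_ne j k with rfl | hjk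
        · rw [Function.update_of_ne hik, Function.update_self]
          exact le_max_of_le_left (ih i j)
        · rw [Function.update_of_ne hik, Function.update_of_ne hjk]
          exact ih i j
end

section
/- Local fair-termination criterion is correct: if a fairness model is locally fairly terminating, then it is fairly terminating (every fair run is finite). -/
/-- A fairness model: a labeled transition system over states `S` and roles `R`, with an
enabled-roles map `ER` that (i) approximates the outgoing labels and (ii) does not disable
other roles along transitions. -/
structure FairnessModel (S R : Type) where
  step : S → R → S → Prop
  ER : S → Finset R
  step_enabled : ∀ ⦃s ρ s'⦄, step s ρ s' → ρ ∈ ER s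
  enabled_mono : ∀ ⦃s ρ s'⦄, step s ρ s' → ∀ ρ', ρ' ≠ ρ → ρ' ∈ ER s → ρ' ∈ ER s'

/-- An infinite run of a fairness model: an infinite sequence of consecutive labeled
transitions. -/
def InfRun {S R : Type} (M : FairnessModel S R) (st : ℕ → S) (lb : ℕ → R) : Prop :=
  ∀ n, M.step (st n) (lb n) (st (n + 1))

/-- An infinite run is fair if every role enabled at any point is eventually taken. -/
def FairInfRun {S R : Type} (M : FairnessModel S R) (st : ℕ → S) (lb : ℕ → R) : Prop :=
  ∀ n ρ, ρ ∈ M.ER (st n) → ∃ m, n ≤ m ∧ lb m = ρ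

/-- A model is fairly terminating if every fair run is finite, i.e., there is no fair
infinite run (finite runs are always fair). -/
def FairlyTerminating {S R : Type} (M : FairnessModel S R) : Prop :=
  ∀ st lb, InfRun M st lb → ¬ FairInfRun M st lb

/-- A model is locally fairly terminating if there are a partial order on states whose
strict part is well-founded and a map `π` from states to roles such that: (1) every
transition is non-increasing; (2) at every non-dead-end state `s`, `π s` is enabled and
every `π s`-transition strictly decreases; (3) transitions labeled by other roles preserve
`π`. -/
def LocallyFairlyTerminating {S R : Type} (M : FairnessModel S R) : Prop :=
  ∃ le : S → S → Prop, IsPartialOrder S le ∧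
    WellFounded (fun a b => le a b ∧ a ≠ b) ∧
    ∃ π : S → R,
      (∀ s ρ s', M.step s ρ s' → le s' s) ∧
      (∀ s, (∃ ρ s', M.step s ρ s') →
        π s ∈ M.ER s ∧ ∀ s', M.step s (π s) s' → le s' s ∧ s' ≠ s) ∧
      (∀ s ρ s', M.step s ρ s' → ρ ≠ π s → π s' = π s)

/-- The local fair-termination criterion is correct: a locally fairly terminating fairness
model is fairly terminating. -/
theorem locally_fairly_terminating_correct {S R : Type} (M : FairnessModel S R)
    (h : LocallyFairlyTerminating M) : FairlyTerminating M := by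
  obtain ⟨le, hpo, hwf, π, hdec, hpi, hpres⟩ := h
  intro st lb hrun hfair
  have hle : ∀ N n, N ≤ n → le (st n) (st N) := by
    intro N n hNn
    induction n with
    | zero =>
      have : N = 0 := Nat.le_zero.mp hNn
      subst this; exact hpo.refl _
    | succ n ih =>
      rcases Nat.lt_or_ge n N with h1 | h1
      · have : N = n + 1 := le_antisymm hNn h1
        subst this; exact hpo.refl _
      · exact hpo.trans _ _ _ (hdec _ _ _ (hrun n)) (ih h1)
  obtain ⟨m, hmem, hmin⟩ := hwf.has_min (Set.range st) ⟨st 0, 0, rfl⟩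
  obtain ⟨N, hN⟩ := hmem
  have hst : ∀ n, N ≤ n → st n = st N := by
    intro n hn
    by_contra hne
    exact hmin (st n) ⟨n, rfl⟩ ⟨hN ▸ hle N n hn, fun hc => hne (hc.trans hN.symm)⟩
  obtain ⟨henab, hdecr⟩ := hpi (st N) ⟨lb N, st (N + 1), hrun N⟩
  obtain ⟨m', hm'N, hlb⟩ := hfair N (π (st N)) henab
  have h1 : st m' = st N := hst m' hm'N
  have h2 : st (m' + 1) = st N := hst (m' + 1) (le_trans hm'N (Nat.le_succ _))
  have hr := hrun m'
  rw [h1, hlb] at hr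
  exact (hdecr _ hr).2 h2
end
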